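/- Let S, ⟨·,·⟩ be a Clifford module as above, ρ ≥ 0 a real number, J ∈ ℝ^n, and set ℛ = (1/2)(ρ·Id + Σ_i J_i e_i·e_0·), a Hermitian operator. Suppose ψ ∈ S satisfies ℛ is positive semidefinite and ⟨ℛψ, ψ⟩ = 0. Then ℛψ = 0; consequently, with V = ⟨ψ,ψ⟩ and W_k = (e_k·ψ,ψ), one has ρV = Σ_i J_i W_i and ρ W_k = J_k V for each k. If in addition V > 0, then ρ = |J|. -/

import Mathlib

local notation "⟪" x ", " y "⟫" => @inner ℂ _ _ x y

/-- If ℛ = (1/2)(ρ·Id + Σ_i J_i e_i·e_0·) is positive semidefinite and ⟨ℛψ,ψ⟩ = 0,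
then ℛψ = 0; with V = ⟨ψ,ψ⟩ and W_k = (e_k·ψ,ψ) one has ρV = Σ J_i W_i and
ρW_k = J_k V; and if V > 0 then ρ = |J|. -/
theorem stmt9 (n : ℕ) (S : Type*) [NormedAddCommGroup S] [InnerProductSpace ℂ S]
    [FiniteDimensional ℂ S]
    (e : Fin (n + 1) → (S →ₗ[ℂ] S))
    (hcl : ∀ α β : Fin (n + 1), e α ∘ₗ e β + e β ∘ₗ e α
      = ((-2 : ℂ) * (if α = β then (if α = 0 then -1 else 1) else 0)) • LinearMap.id)
    (he0 : ∀ ψ φ : S, ⟪e 0 ψ, φ⟫ = ⟪ψ, e 0 φ⟫)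
    (hskew : ∀ (i : Fin n) (ψ φ : S), ⟪e i.succ ψ, φ⟫ = -⟪ψ, e i.succ φ⟫)
    (ρ : ℝ) (hρ : 0 ≤ ρ) (J : Fin n → ℝ)
    (R : S →ₗ[ℂ] S)
    (hR : R = (1 / 2 : ℂ) •
      ((ρ : ℂ) • LinearMap.id + ∑ i : Fin n, (J i : ℂ) • (e i.succ ∘ₗ e 0)))
    (hpsd : ∀ φ : S, 0 ≤ (⟪R φ, φ⟫).re)
    (ψ : S) (h0 : ⟪R ψ, ψ⟫ = 0) :
    R ψ = 0 ∧
    ρ * ‖ψ‖ ^ 2 = ∑ i : Fin n, J i * (⟪e 0 (e i.succ ψ), ψ⟫).re ∧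
    (∀ k : Fin n, ρ * (⟪e 0 (e k.succ ψ), ψ⟫).re = J k * ‖ψ‖ ^ 2) ∧
    (0 < ‖ψ‖ ^ 2 → ρ = Real.sqrt (∑ i : Fin n, J i ^ 2)) := by
  have hcl' : ∀ (α β : Fin (n+1)) (x : S), e α (e β x) + e β (e α x)
      = ((-2 : ℂ) * (if α = β then (if α = 0 then -1 else 1) else 0)) • x := by
    intro α β x
    have h := LinearMap.congr_fun (hcl α β) x
    simpa only [LinearMap.add_apply, LinearMap.comp_apply, LinearMap.smul_apply,
      LinearMap.id_apply] using h
  have e0sq : ∀ x : S, e 0 (e 0 x) = x := by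
    intro x
    have h := hcl' 0 0 x
    simp only [eq_self_iff_true, if_true] at h
    have h2 : e 0 (e 0 x) = (2⁻¹:ℂ) • ((-2 * -1 : ℂ) • x) := by rw [← h]; module
    rw [smul_smul] at h2
    norm_num at h2
    exact h2
  have esq : ∀ (i : Fin n) (x : S), e i.succ (e i.succ x) = -x := by
    intro i x
    have h := hcl' i.succ i.succ x
    simp only [eq_self_iff_true, if_true, if_neg (Fin.succ_ne_zero i)] at h
    have h2 : e i.succ (e i.succ x) = (2⁻¹:ℂ) • ((-2 * 1 : ℂ) • x) := by rw [← h]; module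
    rw [smul_smul] at h2
    norm_num at h2
    simpa [neg_one_smul] using h2
  have hanti : ∀ (α β : Fin (n+1)), α ≠ β → ∀ x : S, e α (e β x) = - e β (e α x) := by
    intro α β hne x
    have h := hcl' α β x
    simp [hne] at h
    exact eq_neg_of_add_eq_zero_left h
  have hA : ∀ (i : Fin n) (x y : S), ⟪e i.succ (e 0 x), y⟫ = ⟪x, e i.succ (e 0 y)⟫ := by
    intro i x y
    rw [hskew i (e 0 x) y, he0 x (e i.succ y), hanti 0 i.succ (Fin.succ_ne_zero i).symm y,
      inner_neg_right, neg_neg]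
  have hRapp : ∀ x : S, R x = (1/2:ℂ) • ((ρ:ℂ) • x + ∑ i : Fin n, (J i:ℂ) • e i.succ (e 0 x)) := by
    intro x
    rw [hR]
    simp [LinearMap.sum_apply]
  have hRsym : ∀ x y : S, ⟪R x, y⟫ = ⟪x, R y⟫ := by
    intro x y
    rw [hRapp x, hRapp y]
    rw [inner_smul_left, inner_smul_right, inner_add_left, inner_add_right,
      inner_smul_left, inner_smul_right, sum_inner, inner_sum]
    congr 1
    · simp [map_div₀, Complex.conj_ofNat]
    congr 1
    · rw [Complex.conj_ofReal]
    · apply Finset.sum_congr rfl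
      intro i _
      rw [inner_smul_left, inner_smul_right, Complex.conj_ofReal, hA]
  have hRpsi : R ψ = 0 := by
    have hcψ : ⟪R (R ψ), ψ⟫ = ⟪R ψ, R ψ⟫ := hRsym (R ψ) ψ
    have expand : ∀ t : ℝ, ⟪R (ψ + (t:ℂ) • R ψ), ψ + (t:ℂ) • R ψ⟫
        = ((t^2:ℝ):ℂ) * ⟪R (R ψ), R ψ⟫ + ((2*t:ℝ):ℂ) * ⟪R ψ, R ψ⟫ := by
      intro t
      simp only [map_add, map_smul, inner_add_left, inner_add_right, inner_smul_left,
        inner_smul_right, Complex.conj_ofReal, h0, hcψ]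
      push_cast
      ring
    have key : ∀ t : ℝ, 0 ≤ t^2 * (⟪R (R ψ), R ψ⟫).re + 2*t*(‖R ψ‖^2) := by
      intro t
      have h := hpsd (ψ + (t:ℂ) • R ψ)
      rw [expand t] at h
      simpa [Complex.add_re, Complex.re_ofReal_mul, inner_self_eq_norm_sq_to_K,
        ← Complex.ofReal_pow, Complex.ofReal_re] using h
    have ha : 0 ≤ (⟪R (R ψ), R ψ⟫).re := hpsd (R ψ)
    set a := (⟪R (R ψ), R ψ⟫).re with hadef
    have hb : ‖R ψ‖^2 = 0 := by
      by_contra hbne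
      have hbpos : 0 < ‖R ψ‖^2 := lt_of_le_of_ne (sq_nonneg _) (Ne.symm hbne)
      set b := ‖R ψ‖^2 with hbdef
      have ha1 : (0:ℝ) < a + 1 := by linarith
      have ht := key (-(b/(a+1)))
      have hq : (b/(a+1)) * (a+1) = b := div_mul_cancel₀ b (ne_of_gt ha1)
      have htpos : 0 < b/(a+1) := div_pos hbpos ha1
      nlinarith [ht, hq, htpos, hbpos, ha, mul_pos htpos htpos, mul_pos htpos hbpos]
    have : ‖R ψ‖ = 0 := by
      have := pow_eq_zero_iff (two_ne_zero) |>.mp hb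
      exact this
    exact norm_eq_zero.mp this
  have hu : (ρ:ℂ) • ψ + ∑ i : Fin n, (J i:ℂ) • e i.succ (e 0 ψ) = 0 := by
    have h := hRpsi
    rw [hRapp ψ] at h
    rcases smul_eq_zero.mp h with h' | h'
    · norm_num at h'
    · exact h'
  have hW : ∀ i : Fin n, ⟪e 0 (e i.succ ψ), ψ⟫ = -⟪e i.succ (e 0 ψ), ψ⟫ := by
    intro i
    rw [hanti 0 i.succ (Fin.succ_ne_zero i).symm ψ, inner_neg_left]
  have h2 : ρ * ‖ψ‖^2 + ∑ i : Fin n, J i * (⟪e i.succ (e 0 ψ), ψ⟫).re = 0 := by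
    have h := congrArg (fun v => (⟪v, ψ⟫).re) hu
    simp only [inner_add_left, sum_inner, inner_smul_left, Complex.conj_ofReal,
      inner_zero_left] at h
    simpa [Complex.add_re, Complex.re_sum, Complex.re_ofReal_mul,
      inner_self_eq_norm_sq_to_K, ← Complex.ofReal_pow, Complex.ofReal_re] using h
  have hWsum : ∑ i : Fin n, J i * (⟪e 0 (e i.succ ψ), ψ⟫).re
      = -∑ i : Fin n, J i * (⟪e i.succ (e 0 ψ), ψ⟫).re := by
    rw [← Finset.sum_neg_distrib]
    refine Finset.sum_congr rfl fun i _ => ?_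
    rw [hW i, Complex.neg_re]
    ring
  have claim2 : ρ * ‖ψ‖ ^ 2 = ∑ i : Fin n, J i * (⟪e 0 (e i.succ ψ), ψ⟫).re := by
    rw [hWsum]; linarith
  have hnormpsi : ⟪e 0 ψ, e 0 ψ⟫ = ⟪ψ, ψ⟫ := by rw [he0, e0sq]
  have horth : ∀ i k : Fin n, (⟪e k.succ (e 0 ψ), e i.succ (e 0 ψ)⟫).re
      = if i = k then ‖ψ‖^2 else 0 := by
    intro i k
    by_cases hik : i = k
    · subst hik
      rw [hskew i, esq i (e 0 ψ), if_pos rfl]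
      simp [hnormpsi, inner_self_eq_norm_sq_to_K, ← Complex.ofReal_pow]
      have hsq : ‖e 0 ψ‖ ^ 2 = ‖ψ‖ ^ 2 := by
        rw [← inner_self_eq_norm_sq (𝕜 := ℂ), ← inner_self_eq_norm_sq (𝕜 := ℂ), hnormpsi]
      exact (pow_left_inj₀ (norm_nonneg _) (norm_nonneg _) two_ne_zero).mp hsq
    · rw [if_neg hik, hskew k]
      set x := e 0 ψ with hx
      set z := ⟪x, e k.succ (e i.succ x)⟫ with hz
      have e1 : ⟪e k.succ x, e i.succ x⟫ = -z := hskew k x (e i.succ x)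
      have e2 : ⟪e i.succ (e k.succ x), x⟫ = -⟪e k.succ x, e i.succ x⟫ :=
        hskew i (e k.succ x) x
      have e3 : e i.succ (e k.succ x) = - e k.succ (e i.succ x) :=
        hanti i.succ k.succ (fun h => hik (Fin.succ_inj.mp h)) x
      have e4 : ⟪e k.succ (e i.succ x), x⟫ = (starRingEnd ℂ) z := by
        rw [hz, inner_conj_symm]
      have e5 : z = -(starRingEnd ℂ) z := by
        have := e2
        rw [e3, inner_neg_left, e4, e1] at this
        simpa using this.symm
      have hre : z.re = 0 := by
        have := congrArg Complex.re e5
        simp only [Complex.neg_re, Complex.conj_re] at this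
        linarith
      simp [hre]
  have claim3 : ∀ k : Fin n, ρ * (⟪e 0 (e k.succ ψ), ψ⟫).re = J k * ‖ψ‖^2 := by
    intro k
    have h := congrArg (fun v => (⟪e k.succ (e 0 ψ), v⟫).re) hu
    simp only [inner_add_right, inner_sum, inner_smul_right, inner_zero_right] at h
    rw [hW k, Complex.neg_re]
    simp only [Complex.add_re, Complex.re_sum, Complex.re_ofReal_mul, horth,
      mul_ite, mul_zero, Finset.sum_ite_eq', Finset.mem_univ, if_true, Complex.zero_re] at h
    linarith
  refine ⟨hRpsi, claim2, claim3, ?_⟩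
  intro hV
  have h1 : ρ^2 * ‖ψ‖^2 = ∑ i : Fin n, J i * (ρ * (⟪e 0 (e i.succ ψ), ψ⟫).re) := by
    rw [pow_two, mul_assoc, claim2, Finset.mul_sum]
    exact Finset.sum_congr rfl fun i _ => by ring
  rw [Finset.sum_congr rfl (fun i (_ : i ∈ Finset.univ) => by rw [claim3 i])] at h1
  have h2 : ∑ i : Fin n, J i * (J i * ‖ψ‖^2) = (∑ i : Fin n, J i^2) * ‖ψ‖^2 := by
    rw [Finset.sum_mul]
    exact Finset.sum_congr rfl fun i _ => by ring
  have hρ2 : ρ^2 = ∑ i : Fin n, J i^2 :=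
    mul_right_cancel₀ (ne_of_gt hV) (h1.trans h2)
  rw [← hρ2, Real.sqrt_sq hρ]
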